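/- Let μ > 0. Then as E → 0⁺, ∫_{−E}^{E} (E² − y²)/(A₁(E,y)·A₂(E,y)) dy = E³/(3μ²) − E⁵/(10μ⁴) + 11·E⁷/(280μ⁶) + O(E⁸). -/

import Mathlib

open Real Filter Asymptotics Topology MeasureTheory

noncomputable def A1 (μ x y : ℝ) : ℝ := Real.sqrt ((x + y)^2 + 4*μ^2)
noncomputable def A2 (μ x y : ℝ) : ℝ := Real.sqrt ((x - y)^2 + 4*μ^2)

/-- Upper bound for `1/√(1+u)` by its degree-2 Taylor polynomial. -/
lemma sqrt_inv_ub (u : ℝ) (h0 : 0 ≤ u) :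
    1 / Real.sqrt (1 + u) ≤ 1 - u/2 + 3*u^2/8 := by
  have hsq : Real.sqrt (1 + u) ^ 2 = 1 + u := Real.sq_sqrt (by linarith)
  have hr1 : 1 ≤ Real.sqrt (1 + u) := by
    have := Real.sqrt_le_sqrt (show (1:ℝ) ≤ 1 + u by linarith)
    rwa [Real.sqrt_one] at this
  set r := Real.sqrt (1 + u) with hr
  have hrpos : (0:ℝ) < r := by linarith
  rw [div_le_iff₀ hrpos]
  have hp : (0:ℝ) < 1 - u/2 + 3*u^2/8 := by nlinarith [sq_nonneg (u - 1)]
  have hsq2 : 1 ≤ ((1 - u/2 + 3*u^2/8) * r)^2 := by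
    have h3 : 0 ≤ u^3 := by positivity
    have h5 : 0 ≤ u^5 := by positivity
    have h4 : 0 ≤ u^4 := by positivity
    nlinarith [hsq, h3, h5, h4, sq_nonneg (3*u - 2)]
  nlinarith [mul_pos hp hrpos, hsq2]

/-- Lower bound for `1/√(1+u)` by degree-3 Taylor polynomial, valid on `[0,1]`. -/
lemma sqrt_inv_lb (u : ℝ) (h0 : 0 ≤ u) (h1 : u ≤ 1) :
    1 - u/2 + 3*u^2/8 - 5/16*u^3 ≤ 1 / Real.sqrt (1 + u) := by
  have hsq : Real.sqrt (1 + u) ^ 2 = 1 + u := Real.sq_sqrt (by linarith)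
  have hr1 : 1 ≤ Real.sqrt (1 + u) := by
    have := Real.sqrt_le_sqrt (show (1:ℝ) ≤ 1 + u by linarith)
    rwa [Real.sqrt_one] at this
  set r := Real.sqrt (1 + u) with hr
  have hrpos : (0:ℝ) < r := by linarith
  rw [le_div_iff₀ hrpos]
  have hu3 : u^3 ≤ 1 := pow_le_one₀ h0 h1
  have hq : (0:ℝ) < 1 - u/2 + 3*u^2/8 - 5/16*u^3 := by nlinarith [sq_nonneg u]
  have hsq2 : ((1 - u/2 + 3*u^2/8 - 5/16*u^3) * r)^2 ≤ 1 := by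
    have h4 : 0 ≤ u^4 := by positivity
    have h41 : 0 ≤ u^4 * (1 - u) := by nlinarith
    have h43 : 0 ≤ u^4 * (1 - u^3) := by nlinarith
    have h6 : 0 ≤ u^6 := by positivity
    nlinarith [hsq, h4, h41, h43, h6]
  nlinarith [mul_pos hq hrpos, hsq2]

/-- Derivative of the explicit antiderivative used below. -/
lemma poly_deriv (a0 a2 a4 a6 a8 a10 y : ℝ) :
    HasDerivAt (fun y : ℝ => a0*y + a2*y^3/3 + a4*y^5/5 + a6*y^7/7 + a8*y^9/9 + a10*y^11/11)
      (a0 + a2*y^2 + a4*y^4 + a6*y^6 + a8*y^8 + a10*y^10) y := by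
  have h := (((((((hasDerivAt_id y).const_mul a0).add
    (((hasDerivAt_pow 3 y).const_mul a2).div_const 3)).add
    (((hasDerivAt_pow 5 y).const_mul a4).div_const 5)).add
    (((hasDerivAt_pow 7 y).const_mul a6).div_const 7)).add
    (((hasDerivAt_pow 9 y).const_mul a8).div_const 9)).add
    (((hasDerivAt_pow 11 y).const_mul a10).div_const 11))
  refine h.congr_deriv ?_
  push_cast
  ring

/-- The polynomial approximation `gm` to the integrand (expanded in powers of `y`). -/
noncomputable def gm (μ E y : ℝ) : ℝ :=
  (E^2/(4*μ^2) - E^4/(16*μ^4) + E^6/(64*μ^6) + 3*E^8/(512*μ^8) + 3*E^10/(8192*μ^10))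
  + (-1/(4*μ^2) + 3*E^4/(64*μ^6) - 3*E^6/(256*μ^8) - 15*E^8/(8192*μ^10))*y^2
  + (1/(16*μ^4) - 3*E^2/(64*μ^6) + 15*E^6/(4096*μ^10))*y^4
  + (-1/(64*μ^6) + 3*E^2/(256*μ^8) - 15*E^4/(4096*μ^10))*y^6
  + (-3/(512*μ^8) + 15*E^2/(8192*μ^10))*y^8
  + (-3/(8192*μ^10))*y^10

/-- Antiderivative of `gm` in `y`. -/
noncomputable def Gm (μ E y : ℝ) : ℝ :=
  (E^2/(4*μ^2) - E^4/(16*μ^4) + E^6/(64*μ^6) + 3*E^8/(512*μ^8) + 3*E^10/(8192*μ^10))*y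
  + (-1/(4*μ^2) + 3*E^4/(64*μ^6) - 3*E^6/(256*μ^8) - 15*E^8/(8192*μ^10))*y^3/3
  + (1/(16*μ^4) - 3*E^2/(64*μ^6) + 15*E^6/(4096*μ^10))*y^5/5
  + (-1/(64*μ^6) + 3*E^2/(256*μ^8) - 15*E^4/(4096*μ^10))*y^7/7
  + (-3/(512*μ^8) + 15*E^2/(8192*μ^10))*y^9/9
  + (-3/(8192*μ^10))*y^11/11

lemma hasDerivAt_Gm (μ E y : ℝ) : HasDerivAt (Gm μ E) (gm μ E y) y := by
  unfold Gm gm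
  exact poly_deriv _ _ _ _ _ _ y

lemma continuous_gm (μ E : ℝ) : Continuous (gm μ E) := by
  unfold gm; fun_prop

lemma gm_eq (μ E y : ℝ) (hμ : μ ≠ 0) :
    gm μ E y = (E^2 - y^2)/(4*μ^2) *
      (1 - ((E^2 - y^2)^2 + 8*μ^2*(E^2 + y^2))/(16*μ^4)/2
         + 3*(((E^2 - y^2)^2 + 8*μ^2*(E^2 + y^2))/(16*μ^4))^2/8) := by
  unfold gm
  field_simp
  ring

set_option maxHeartbeats 1000000 in
lemma Gm_val (μ E : ℝ) (hμ : μ ≠ 0) :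
    Gm μ E E - Gm μ E (-E) =
      (E^3/(3*μ^2) - E^5/(10*μ^4) + 11*E^7/(280*μ^6))
      + (E^9/(168*μ^8) + E^11/(3696*μ^10)) := by
  unfold Gm
  field_simp
  ring

set_option maxHeartbeats 1000000 in
theorem stmt14 (μ : ℝ) (hμ : 0 < μ) :
    (fun E => (∫ y in (-E)..E, (E^2 - y^2) / (A1 μ E y * A2 μ E y))
        - (E^3/(3*μ^2) - E^5/(10*μ^4) + 11*E^7/(280*μ^6)))
      =O[𝓝[>] (0:ℝ)] fun E => E^8 := by
  rw [isBigO_iff]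
  refine ⟨1/μ^7, ?_⟩
  filter_upwards [Ioc_mem_nhdsGT_of_mem (Set.left_mem_Ico.mpr (half_pos hμ))] with E hE
  obtain ⟨hE0, hEle⟩ := hE
  have hμ0 : μ ≠ 0 := hμ.ne'
  have hE2 : E^2 ≤ μ^2/4 := by nlinarith
  -- notation
  set t : ℝ → ℝ := fun y => ((E^2 - y^2)^2 + 8*μ^2*(E^2 + y^2))/(16*μ^4) with ht
  have ht0 : ∀ y, 0 ≤ t y := by intro y; rw [ht]; positivity
  have hrpos : ∀ y, 0 < Real.sqrt (1 + t y) := fun y =>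
    Real.sqrt_pos.mpr (by linarith [ht0 y])
  -- product formula
  have hprod : ∀ y : ℝ, A1 μ E y * A2 μ E y = 4*μ^2 * Real.sqrt (1 + t y) := by
    intro y
    rw [A1, A2, ← Real.sqrt_mul (by positivity)]
    rw [show ((E + y)^2 + 4*μ^2) * ((E - y)^2 + 4*μ^2) = (4*μ^2)^2 * (1 + t y) by
      rw [ht]; field_simp; ring]
    rw [Real.sqrt_mul (by positivity), Real.sqrt_sq (by positivity)]
  have hf_eq : ∀ y : ℝ, (E^2 - y^2) / (A1 μ E y * A2 μ E y)
      = (E^2 - y^2)/(4*μ^2) * (1 / Real.sqrt (1 + t y)) := by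
    intro y
    rw [hprod y]
    rw [div_mul_eq_div_div]
    ring
  -- pointwise bound on the interval
  have hbound : ∀ y ∈ Set.uIoc (-E) E,
      ‖(E^2 - y^2) / (A1 μ E y * A2 μ E y) - gm μ E y‖ ≤ 5/8 * E^8/μ^8 := by
    intro y hy
    rw [Set.uIoc_of_le (by linarith : -E ≤ E)] at hy
    have hy2 : y^2 ≤ E^2 := sq_le_sq' (le_of_lt hy.1) hy.2
    have h1 : (E^2 - y^2)^2 ≤ E^4 := by nlinarith [sq_nonneg y]
    have h2 : E^4 ≤ μ^2/4 * E^2 := by nlinarith [sq_nonneg E]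
    have h3 : 8*μ^2*(E^2 + y^2) ≤ 16*μ^2*E^2 := by nlinarith [sq_nonneg μ]
    have h4 : (E^2 - y^2)^2 + 8*μ^2*(E^2 + y^2) ≤ 65/4*(μ^2*E^2) := by linarith
    have htub : t y ≤ 2*E^2/μ^2 := by
      rw [ht]
      rw [div_le_div_iff₀ (by positivity) (by positivity)]
      nlinarith [mul_le_mul_of_nonneg_right h4 (sq_nonneg μ), sq_nonneg (μ^2*E)]
    have ht1 : t y ≤ 1 := by
      refine le_trans htub ?_
      rw [div_le_one (by positivity)]
      nlinarith
    have hub := sqrt_inv_ub (t y) (ht0 y)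
    have hlb := sqrt_inv_lb (t y) (ht0 y) ht1
    have habs : |1 / Real.sqrt (1 + t y)
        - (1 - t y/2 + 3*(t y)^2/8)| ≤ 5/16*(t y)^3 := by
      rw [abs_le]; constructor <;> linarith
    have hcube : (t y)^3 ≤ (2*E^2/μ^2)^3 := pow_le_pow_left₀ (ht0 y) htub 3
    have hgm_eq : gm μ E y = (E^2 - y^2)/(4*μ^2) * (1 - t y/2 + 3*(t y)^2/8) :=
      gm_eq μ E y hμ0
    rw [hf_eq y, hgm_eq, ← mul_sub, Real.norm_eq_abs, abs_mul]
    have hfac : |(E^2 - y^2)/(4*μ^2)| ≤ E^2/(4*μ^2) := by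
      rw [abs_of_nonneg (div_nonneg (by linarith) (by positivity))]
      gcongr
      nlinarith [sq_nonneg y]
    calc |(E^2 - y^2)/(4*μ^2)| * |1 / Real.sqrt (1 + t y)
          - (1 - t y/2 + 3*(t y)^2/8)|
        ≤ E^2/(4*μ^2) * (5/16*(2*E^2/μ^2)^3) := by
          apply mul_le_mul hfac _ (abs_nonneg _) (by positivity)
          refine le_trans habs ?_
          gcongr
      _ = 5/8 * E^8/μ^8 := by field_simp; ring
  -- continuity / integrability
  have hA1pos : ∀ y, 0 < A1 μ E y := fun y => Real.sqrt_pos.mpr (by positivity)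
  have hA2pos : ∀ y, 0 < A2 μ E y := fun y => Real.sqrt_pos.mpr (by positivity)
  have hcf : Continuous fun y => (E^2 - y^2) / (A1 μ E y * A2 μ E y) := by
    apply Continuous.div
    · fun_prop
    · unfold A1 A2; fun_prop
    · intro y; exact (mul_pos (hA1pos y) (hA2pos y)).ne'
  have hif : IntervalIntegrable (fun y => (E^2 - y^2) / (A1 μ E y * A2 μ E y))
      volume (-E) E := hcf.intervalIntegrable _ _
  have hig : IntervalIntegrable (gm μ E) volume (-E) E :=
    (continuous_gm μ E).intervalIntegrable _ _
  -- value of ∫ gm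
  have hIg : ∫ y in (-E)..E, gm μ E y =
      (E^3/(3*μ^2) - E^5/(10*μ^4) + 11*E^7/(280*μ^6))
      + (E^9/(168*μ^8) + E^11/(3696*μ^10)) := by
    rw [intervalIntegral.integral_eq_sub_of_hasDerivAt
      (fun y _ => hasDerivAt_Gm μ E y) hig]
    exact Gm_val μ E hμ0
  -- split
  have hsplit : (∫ y in (-E)..E, (E^2 - y^2) / (A1 μ E y * A2 μ E y))
      - (E^3/(3*μ^2) - E^5/(10*μ^4) + 11*E^7/(280*μ^6))
      = (∫ y in (-E)..E, ((E^2 - y^2) / (A1 μ E y * A2 μ E y) - gm μ E y))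
        + (E^9/(168*μ^8) + E^11/(3696*μ^10)) := by
    rw [intervalIntegral.integral_sub hif hig, hIg]
    ring
  rw [hsplit]
  have hb1 : ‖∫ y in (-E)..E, ((E^2 - y^2) / (A1 μ E y * A2 μ E y) - gm μ E y)‖
      ≤ (5/8 * E^8/μ^8) * |E - (-E)| :=
    intervalIntegral.norm_integral_le_of_norm_le_const hbound
  have habs2 : |E - (-E)| = 2*E := by
    rw [abs_of_nonneg (by linarith : (0:ℝ) ≤ E - (-E))]; ring
  rw [habs2] at hb1
  have hb2 : ‖E^9/(168*μ^8) + E^11/(3696*μ^10)‖ = E^9/(168*μ^8) + E^11/(3696*μ^10) := by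
    rw [Real.norm_eq_abs, abs_of_nonneg (by positivity)]
  have hnorm8 : ‖E^8‖ = E^8 := by
    rw [Real.norm_eq_abs, abs_of_nonneg (by positivity)]
  rw [hnorm8]
  refine le_trans (norm_add_le _ _) ?_
  rw [hb2]
  refine le_trans (add_le_add_left hb1 _) ?_
  have hE9 : E^9 ≤ E^8 * (μ/2) := by
    calc E^9 = E^8 * E := by ring
      _ ≤ E^8 * (μ/2) := by gcongr
  have hE11 : E^11 ≤ E^8 * (μ/2)^3 := by
    calc E^11 = E^8 * E^3 := by ring
      _ ≤ E^8 * (μ/2)^3 := by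
          have h3 : E^3 ≤ (μ/2)^3 := by nlinarith
          nlinarith [pow_nonneg hE0.le 8]
  have h10 : (0:ℝ) < μ^10 := by positivity
  rw [← sub_nonneg]
  have expand : 1/μ^7 * E^8 - ((5/8 * E^8/μ^8) * (2*E) + (E^9/(168*μ^8) + E^11/(3696*μ^10)))
      = (E^8*μ^3 - 5/4*E^9*μ^2 - 1/168*E^9*μ^2 - 1/3696*E^11) / μ^10 := by
    field_simp
    ring
  rw [expand]
  apply div_nonneg _ h10.le
  nlinarith [mul_le_mul_of_nonneg_right hE9 (sq_nonneg μ), hE11,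
    mul_nonneg (pow_nonneg hE0.le 8) (pow_nonneg hμ.le 3)]
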